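/- Let G ≤ Aut(X*), with X = {0,1}, be a self-similar group of binary rooted tree automorphisms. Then G acts transitively on every level of the tree (i.e., on the set of words of length n for every n) if and only if G is infinite. -/

import Mathlib

/-- `f` is an automorphism of the binary rooted tree `X* = List Bool`: a permutation of
the set of finite binary words preserving word length and the prefix relation. -/
def IsTreeAut (f : Equiv.Perm (List Bool)) : Prop :=
  (∀ v : List Bool, (f v).length = v.length) ∧
    ∀ v w : List Bool, v <+: w → f v <+: f w

/-- A subgroup of the permutations of `X* = List Bool` is self-similar if for every
element `g`, every letter `x` admits a letter `y` and an element `h` of the group with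
`g(xw) = y h(w)` for every word `w` (i.e. all sections of elements belong to the
group). -/
def IsSelfSimilar (G : Subgroup (Equiv.Perm (List Bool))) : Prop :=
  ∀ g ∈ G, ∀ x : Bool, ∃ y : Bool, ∃ h ∈ G, ∀ w : List Bool, g (x :: w) = y :: h w

/-- A self-similar group `G ≤ Aut(X*)` of binary rooted tree
automorphisms acts transitively on every level of the tree if and only if it is
infinite. -/
theorem self_similar_level_transitive_iff_infinite
    (G : Subgroup (Equiv.Perm (List Bool)))
    (hG : ∀ g ∈ G, IsTreeAut g) (hss : IsSelfSimilar G) :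
    (∀ v w : List Bool, v.length = w.length → ∃ g ∈ G, g v = w) ↔ Infinite G := by
  classical
  have hlen : ∀ g ∈ G, ∀ v : List Bool, (g v).length = v.length := fun g hg => (hG g hg).1
  have hnil : ∀ g ∈ G, g [] = ([] : List Bool) := by
    intro g hg
    have := hlen g hg []
    simpa using List.length_eq_zero_iff.mp (by simpa using this)
  have hchild : ∀ g ∈ G, ∀ (v : List Bool) (x : Bool), ∃ y : Bool,
      g (v ++ [x]) = g v ++ [y] := by
    intro g hg v x
    obtain ⟨t, ht⟩ := (hG g hg).2 v (v ++ [x]) ⟨[x], rfl⟩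
    have h1 : (g v).length + t.length = v.length + 1 := by
      have := hlen g hg (v ++ [x])
      rw [← ht] at this
      simpa using this
    have h2 : t.length = 1 := by
      have := hlen g hg v
      omega
    obtain ⟨y, rfl⟩ := List.length_eq_one_iff.mp h2
    exact ⟨y, ht.symm⟩
  constructor
  · -- level transitive → infinite
    intro htrans
    by_contra hfin
    rw [not_infinite_iff_finite] at hfin
    set c := Nat.card G with hc
    have hex : ∀ f : Fin c → Bool, ∃ g : Equiv.Perm (List Bool),
        g ∈ G ∧ g (List.replicate c false) = List.ofFn f := by
      intro f
      obtain ⟨g, hg, hgv⟩ := htrans (List.replicate c false) (List.ofFn f) (by simp)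
      exact ⟨g, hg, hgv⟩
    choose ψ hψG hψ using hex
    have hinj : Function.Injective (fun f : Fin c → Bool => (⟨ψ f, hψG f⟩ : G)) := by
      intro f f' h
      have h1 : ψ f = ψ f' := congrArg Subtype.val h
      have h2 : List.ofFn f = List.ofFn f' := by rw [← hψ f, ← hψ f', h1]
      exact List.ofFn_injective h2
    have hle : 2 ^ c ≤ c := by
      have := Nat.card_le_card_of_injective _ hinj
      simpa [Nat.card_eq_fintype_card] using this
    exact absurd hle (Nat.not_le.mpr (Nat.lt_two_pow_self (n := c)))
  · -- infinite → level transitive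
    intro hinf
    by_contra hbad
    push_neg at hbad
    obtain ⟨v₀, w₀, hlen0, hbad0⟩ := hbad
    have hP : ∃ m, ∃ v w : List Bool, v.length = m ∧ w.length = m ∧ ∀ g ∈ G, g v ≠ w :=
      ⟨v₀.length, v₀, w₀, rfl, hlen0.symm, hbad0⟩
    obtain ⟨v₁, w₁, hv₁, hw₁, hbad₁⟩ := Nat.find_spec hP
    have hm0 : Nat.find hP ≠ 0 := by
      intro h
      apply hbad₁ 1 (one_mem G)
      have hv : v₁ = [] := List.length_eq_zero_iff.mp (by omega)
      have hw : w₁ = [] := List.length_eq_zero_iff.mp (by omega)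
      simp [hv, hw]
    obtain ⟨n, hmn⟩ : ∃ n, Nat.find hP = n + 1 := ⟨Nat.find hP - 1, by omega⟩
    rw [hmn] at hv₁ hw₁
    have htransn : ∀ v w : List Bool, v.length = n → w.length = n → ∃ g ∈ G, g v = w := by
      intro v w hv hw
      by_contra h
      push_neg at h
      exact Nat.find_min hP (by omega) ⟨v, w, hv, hw, h⟩
    -- the orbit of v₁ at level n+1
    set O : Set (List Bool) := {u | ∃ g ∈ G, g v₁ = u} with hO
    have hv₁O : v₁ ∈ O := ⟨1, one_mem G, by simp⟩
    have hw₁O : w₁ ∉ O := by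
      rintro ⟨g, hg, hgv⟩
      exact hbad₁ g hg hgv
    have hOinv : ∀ g ∈ G, ∀ u ∈ O, g u ∈ O := by
      rintro g hg u ⟨g', hg', rfl⟩
      exact ⟨g * g', mul_mem hg hg', by simp [Equiv.Perm.mul_apply]⟩
    have hOlen : ∀ u ∈ O, u.length = n + 1 := by
      rintro u ⟨g, hg, rfl⟩
      rw [hlen g hg]; omega
    -- decompose v₁
    have hv₁ne : v₁ ≠ [] := by intro h; rw [h] at hv₁; simp at hv₁
    have hv₁dec : v₁.dropLast ++ [v₁.getLast hv₁ne] = v₁ := List.dropLast_append_getLast hv₁ne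
    have hv₁dlen : v₁.dropLast.length = n := by
      rw [List.length_dropLast]; omega
    have hexists : ∀ v : List Bool, v.length = n → ∃ x, v ++ [x] ∈ O := by
      intro v hv
      obtain ⟨g, hg, hgv⟩ := htransn v₁.dropLast v hv₁dlen hv
      obtain ⟨y, hy⟩ := hchild g hg v₁.dropLast (v₁.getLast hv₁ne)
      refine ⟨y, ?_⟩
      have : g v₁ ∈ O := hOinv g hg v₁ hv₁O
      rwa [← hv₁dec, hy, hgv] at this
    have huniq : ∀ v : List Bool, v.length = n → ∀ x y : Bool,
        v ++ [x] ∈ O → v ++ [y] ∈ O → x = y := by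
      intro v hv x y hx hy
      by_contra hxy
      have hall : ∀ z : Bool, v ++ [z] ∈ O := by
        intro z
        have : z = x ∨ z = y := by
          have hd : ∀ a b c : Bool, a ≠ b → c = a ∨ c = b := by decide
          exact hd x y z hxy
        rcases this with rfl | rfl <;> assumption
      -- then O contains every word of length n+1, contradicting w₁ ∉ O
      apply hw₁O
      have hw₁ne : w₁ ≠ [] := by intro h; rw [h] at hw₁; simp at hw₁
      have hw₁dec : w₁.dropLast ++ [w₁.getLast hw₁ne] = w₁ := List.dropLast_append_getLast hw₁ne
      have hw₁dlen : w₁.dropLast.length = n := by rw [List.length_dropLast]; omega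
      obtain ⟨g, hg, hgv⟩ := htransn w₁.dropLast v hw₁dlen hv
      obtain ⟨z, hz⟩ := hchild g hg w₁.dropLast (w₁.getLast hw₁ne)
      have h1 : g w₁ ∈ O := by
        rw [← hw₁dec, hz, hgv]; exact hall z
      have := hOinv g⁻¹ (inv_mem hg) _ h1
      simpa using this
    -- a g fixing level ≤ n fixes level ≤ n+1
    have hfix : ∀ g ∈ G, (∀ u : List Bool, u.length ≤ n → g u = u) →
        ∀ u : List Bool, u.length ≤ n + 1 → g u = u := by
      intro g hg hfx u hu
      rcases le_or_gt u.length n with h | h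
      · exact hfx u h
      have hul : u.length = n + 1 := by omega
      have hune : u ≠ [] := by intro hh; rw [hh] at hul; simp at hul
      have hudec : u.dropLast ++ [u.getLast hune] = u := List.dropLast_append_getLast hune
      set v := u.dropLast with hvdef
      set x := u.getLast hune with hxdef
      have hvl : v.length = n := by rw [hvdef, List.length_dropLast]; omega
      have hgv : g v = v := hfx v (le_of_eq hvl)
      obtain ⟨y, hy⟩ := hchild g hg v x
      rw [hgv] at hy
      obtain ⟨x₀, hx₀⟩ := hexists v hvl
      obtain ⟨y₀, hy₀⟩ := hchild g hg v x₀
      rw [hgv] at hy₀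
      have hgx₀ : g (v ++ [x₀]) = v ++ [x₀] := by
        have h1 : g (v ++ [x₀]) ∈ O := hOinv g hg _ hx₀
        rw [hy₀] at h1 ⊢
        rw [huniq v hvl y₀ x₀ h1 hx₀]
      by_cases hxx : x = x₀
      · rw [← hudec, hxx]; exact hgx₀
      · have hyx : y = x := by
          by_contra hyy
          have hy' : y = x₀ := by
            have hd : ∀ a b c : Bool, a ≠ b → c ≠ a → c = b := by decide
            exact hd x x₀ y hxx hyy
          rw [hy'] at hy
          have := g.injective (hy.trans hgx₀.symm)
          simp at this
          exact hxx this
        rw [← hudec, hy, hyx]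
    -- rigidity: g fixing level ≤ n is the identity
    have hrig : ∀ N : ℕ, ∀ u : List Bool, u.length ≤ N → ∀ g ∈ G,
        (∀ u' : List Bool, u'.length ≤ n → g u' = u') → g u = u := by
      intro N
      induction N with
      | zero =>
        intro u hu g hg hfx
        exact hfix g hg hfx u (by omega)
      | succ N ih =>
        intro u hu g hg hfx
        rcases le_or_gt u.length (n + 1) with h | h
        · exact hfix g hg hfx u h
        cases u with
        | nil => simp at h
        | cons x w =>
          obtain ⟨y, h', hh'G, hsec⟩ := hss g hg x
          have hyx : y = x := by
            have h1 : g [x] = [y] := by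
              have := hsec []
              rwa [hnil h' hh'G] at this
            have h2 : g [x] = [x] := hfix g hg hfx [x] (by simp)
            rw [h1] at h2
            exact (List.cons.injEq _ _ _ _ ▸ h2).1
          have hfx' : ∀ u' : List Bool, u'.length ≤ n → h' u' = u' := by
            intro u' hu'
            have h1 := hsec u'
            have h2 : g (x :: u') = x :: u' := hfix g hg hfx (x :: u') (by simp; omega)
            rw [h2, hyx] at h1
            exact ((List.cons.injEq _ _ _ _).mp h1.symm).2
          have hw : h' w = w := by
            apply ih w _ h' hh'G hfx'
            have : (x :: w).length ≤ N + 1 := hu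
            simp at this; omega
          rw [hsec w, hyx, hw]
    -- hence G embeds into maps of a finite set, so G is finite: contradiction
    haveI : Finite {u : List Bool // u.length ≤ n + 1} := by
      have := List.finite_length_le (α := Bool) (n := n + 1)
      exact this.to_subtype
    set Φ : G → ({u : List Bool // u.length ≤ n + 1} → {u : List Bool // u.length ≤ n + 1}) :=
      fun g u => ⟨g.1 u.1, by rw [hlen g.1 g.2]; exact u.2⟩ with hΦdef
    have hΦinj : Function.Injective Φ := by
      intro a b hab
      have hfx : ∀ u' : List Bool, u'.length ≤ n → ((b : Equiv.Perm (List Bool))⁻¹ * a) u' = u' := by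
        intro u' hu'
        have h1 : a.1 u' = b.1 u' := by
          have := congrFun hab ⟨u', by omega⟩
          exact congrArg Subtype.val this
        simp [Equiv.Perm.mul_apply, h1]
      have hall : ∀ u : List Bool, ((b : Equiv.Perm (List Bool))⁻¹ * a) u = u := by
        intro u
        exact hrig u.length u le_rfl _ (mul_mem (inv_mem b.2) a.2) hfx
      apply Subtype.ext
      apply Equiv.ext
      intro u
      have := hall u
      simp [Equiv.Perm.mul_apply] at this
      have := congrArg (b : Equiv.Perm (List Bool)) this
      simpa using this
    haveI : Finite G := Finite.of_injective Φ hΦinj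
    exact not_finite G
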